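/- Let a, b ∈ ℕ with b ≥ 1. On ℝ² × ℝ² with variables (x, y; ξ, η), let p⁰ = ξ² + x^{4a+2}·η² + x^{2a}·y^{2b}·η², let g = ∂_ξ p⁰ = 2ξ and f = ∂_x p⁰. Define iterated Poisson brackets h₀ = f and h_{j+1} = {h_j, g}. Then h_{4a+1}((0,0); (0,1)) ≠ 0 (indeed h_{4a+1}((0,0);(0,1)) = (−2)^{4a+1}·(4a+2)!). -/

import Mathlib

noncomputable section PoissonAux

abbrev PBE := EuclideanSpace ℝ (Fin 2)

def pbCx : (PBE × PBE) →L[ℝ] ℝ := (EuclideanSpace.proj (0:Fin 2)).comp (ContinuousLinearMap.fst ℝ PBE PBE)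
def pbCy : (PBE × PBE) →L[ℝ] ℝ := (EuclideanSpace.proj (1:Fin 2)).comp (ContinuousLinearMap.fst ℝ PBE PBE)
def pbCxi : (PBE × PBE) →L[ℝ] ℝ := (EuclideanSpace.proj (0:Fin 2)).comp (ContinuousLinearMap.snd ℝ PBE PBE)
def pbCeta : (PBE × PBE) →L[ℝ] ℝ := (EuclideanSpace.proj (1:Fin 2)).comp (ContinuousLinearMap.snd ℝ PBE PBE)

/-- The model function `C ξ² + A x^m η² + B x^n y^k η²`. -/
def pbQ (A B C : ℝ) (m n k : ℕ) : PBE × PBE → ℝ := fun z =>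
  C * (z.2 0)^2 + A * (z.1 0)^m * (z.2 1)^2 + B * (z.1 0)^n * (z.1 1)^k * (z.2 1)^2

lemma pbHasQ (A B C : ℝ) (m n k : ℕ) (z : PBE × PBE) :
    HasFDerivAt (pbQ A B C m n k)
      (((2*C*(z.2 0)) • pbCxi)
        + ((A*m*(z.1 0)^(m-1)*(z.2 1)^2 + B*n*(z.1 0)^(n-1)*(z.1 1)^k*(z.2 1)^2) • pbCx)
        + ((B*(k:ℝ)*(z.1 0)^n*(z.1 1)^(k-1)*(z.2 1)^2) • pbCy)
        + (((2*A*(z.1 0)^m + 2*B*(z.1 0)^n*(z.1 1)^k)*(z.2 1)) • pbCeta)) z := by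
  have hx : HasFDerivAt (fun z : PBE × PBE => z.1 0) pbCx z := pbCx.hasFDerivAt
  have hy : HasFDerivAt (fun z : PBE × PBE => z.1 1) pbCy z := pbCy.hasFDerivAt
  have hxi : HasFDerivAt (fun z : PBE × PBE => z.2 0) pbCxi z := pbCxi.hasFDerivAt
  have heta : HasFDerivAt (fun z : PBE × PBE => z.2 1) pbCeta z := pbCeta.hasFDerivAt
  have h1 := (((hasDerivAt_pow 2 (z.2 0)).comp_hasFDerivAt z hxi).const_mul C)
  have h2 := ((((hasDerivAt_pow m (z.1 0)).comp_hasFDerivAt z hx).const_mul A).mul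
    ((hasDerivAt_pow 2 (z.2 1)).comp_hasFDerivAt z heta))
  have h3 := (((((hasDerivAt_pow n (z.1 0)).comp_hasFDerivAt z hx).const_mul B).mul
    ((hasDerivAt_pow k (z.1 1)).comp_hasFDerivAt z hy)).mul
    ((hasDerivAt_pow 2 (z.2 1)).comp_hasFDerivAt z heta))
  have := (h1.add h2).add h3
  refine HasFDerivAt.congr_fderiv (f := pbQ A B C m n k) this ?_
  ext v <;>
  · simp [ContinuousLinearMap.add_apply, ContinuousLinearMap.smul_apply,
      ContinuousLinearMap.comp_apply, Function.comp, pbCx, pbCy, pbCxi, pbCeta]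
    ring

lemma pbFderivQ_apply (A B C : ℝ) (m n k : ℕ) (z v : PBE × PBE) :
    fderiv ℝ (pbQ A B C m n k) z v =
      2*C*(z.2 0)*(v.2 0)
      + (A*m*(z.1 0)^(m-1)*(z.2 1)^2 + B*n*(z.1 0)^(n-1)*(z.1 1)^k*(z.2 1)^2)*(v.1 0)
      + B*k*(z.1 0)^n*(z.1 1)^(k-1)*(z.2 1)^2*(v.1 1)
      + (2*A*(z.1 0)^m + 2*B*(z.1 0)^n*(z.1 1)^k)*(z.2 1)*(v.2 1) := by
  rw [(pbHasQ A B C m n k z).fderiv]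
  simp [ContinuousLinearMap.add_apply, ContinuousLinearMap.smul_apply,
    ContinuousLinearMap.comp_apply, pbCx, pbCy, pbCxi, pbCeta]

end PoissonAux

/-- Poisson bracket of functions on `ℝ² × ℝ²` in the variables `((x,y), (ξ,η))`. -/
noncomputable def poissonBracket
    (q₁ q₂ : EuclideanSpace ℝ (Fin 2) × EuclideanSpace ℝ (Fin 2) → ℝ) :
    EuclideanSpace ℝ (Fin 2) × EuclideanSpace ℝ (Fin 2) → ℝ :=
  fun z => ∑ j : Fin 2,
    (fderiv ℝ q₁ z (0, EuclideanSpace.single j 1) *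
        fderiv ℝ q₂ z (EuclideanSpace.single j 1, 0) -
      fderiv ℝ q₁ z (EuclideanSpace.single j 1, 0) *
        fderiv ℝ q₂ z (0, EuclideanSpace.single j 1))

/-- For `p⁰ = ξ² + x^{4a+2}η² + x^{2a}y^{2b}η²` (`b ≥ 1`), with `g = ∂_ξ p⁰` and
`f = ∂_x p⁰`, the iterated brackets `h₀ = f`, `h_{j+1} = {h_j, g}` satisfy
`h_{4a+1}((0,0);(0,1)) = (−2)^{4a+1}(4a+2)! ≠ 0`. -/
theorem iterated_bracket_ne_zero
    (a b : ℕ) (hb : 1 ≤ b)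
    (p0 : EuclideanSpace ℝ (Fin 2) × EuclideanSpace ℝ (Fin 2) → ℝ)
    (hp0 : ∀ z, p0 z = (z.2 0) ^ 2 + (z.1 0) ^ (4 * a + 2) * (z.2 1) ^ 2 +
      (z.1 0) ^ (2 * a) * (z.1 1) ^ (2 * b) * (z.2 1) ^ 2)
    (g f : EuclideanSpace ℝ (Fin 2) × EuclideanSpace ℝ (Fin 2) → ℝ)
    (hg : ∀ z, g z = fderiv ℝ p0 z (0, EuclideanSpace.single 0 1))
    (hf : ∀ z, f z = fderiv ℝ p0 z (EuclideanSpace.single 0 1, 0))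
    (h : ℕ → (EuclideanSpace ℝ (Fin 2) × EuclideanSpace ℝ (Fin 2) → ℝ))
    (hh0 : h 0 = f)
    (hhstep : ∀ j, h (j + 1) = poissonBracket (h j) g) :
    h (4 * a + 1) ((0 : EuclideanSpace ℝ (Fin 2)),
        (EuclideanSpace.single 1 1 : EuclideanSpace ℝ (Fin 2))) ≠ 0 ∧
    h (4 * a + 1) ((0 : EuclideanSpace ℝ (Fin 2)),
        (EuclideanSpace.single 1 1 : EuclideanSpace ℝ (Fin 2))) =
      (-2 : ℝ) ^ (4 * a + 1) * (Nat.factorial (4 * a + 2) : ℝ) := by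
  -- p0 is the model function
  have hp0' : p0 = pbQ 1 1 1 (4*a+2) (2*a) (2*b) := by
    funext z; rw [hp0]; simp [pbQ]
  -- g is `2ξ`
  have hgfun : g = fun z => 2 * z.2 0 := by
    funext z
    rw [hg, hp0', pbFderivQ_apply]
    simp [EuclideanSpace.single_apply]
  -- derivative of g in any direction
  have hgd : ∀ z v : EuclideanSpace ℝ (Fin 2) × EuclideanSpace ℝ (Fin 2),
      fderiv ℝ g z v = 2 * v.2 0 := by
    intro z v
    have : HasFDerivAt g ((2:ℝ) • pbCxi) z := by
      rw [hgfun]; exact pbCxi.hasFDerivAt.const_mul 2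
    rw [this.fderiv]
    simp [pbCxi, ContinuousLinearMap.smul_apply, ContinuousLinearMap.comp_apply]
  -- the inductive formula for h j
  have key : ∀ j, h j = pbQ ((-2)^j * (Nat.descFactorial (4*a+2) (j+1) : ℝ))
      ((-2)^j * (Nat.descFactorial (2*a) (j+1) : ℝ)) 0
      (4*a+2 - (j+1)) (2*a - (j+1)) (2*b) := by
    intro j
    induction j with
    | zero =>
      rw [hh0]
      funext z
      rw [hf z, hp0', pbFderivQ_apply]
      simp [pbQ, EuclideanSpace.single_apply, Nat.descFactorial_one]
    | succ j ih =>
      rw [hhstep, ih]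
      funext z
      unfold poissonBracket
      rw [Fin.sum_univ_two]
      rw [pbFderivQ_apply, pbFderivQ_apply, pbFderivQ_apply, pbFderivQ_apply,
        hgd, hgd, hgd, hgd]
      simp only [EuclideanSpace.single_apply, pbQ]
      have e1 : 4*a+2 - (j+1+1) = 4*a+2 - (j+1) - 1 := by omega
      have e2 : 2*a - (j+1+1) = 2*a - (j+1) - 1 := by omega
      rw [e1, e2, Nat.descFactorial_succ, Nat.descFactorial_succ]
      push_cast
      simp [Prod.fst_zero, Prod.snd_zero]
      ring
  -- evaluate
  have hval : h (4 * a + 1) ((0 : EuclideanSpace ℝ (Fin 2)),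
      (EuclideanSpace.single 1 1 : EuclideanSpace ℝ (Fin 2))) =
      (-2 : ℝ) ^ (4 * a + 1) * (Nat.factorial (4 * a + 2) : ℝ) := by
    rw [key]
    have e3 : 4*a+2 - (4*a+1+1) = 0 := by omega
    have hbne : 2*b ≠ 0 := by omega
    have hz : ((0 : EuclideanSpace ℝ (Fin 2)) 0 : ℝ) = 0 := rfl
    have hz1 : ((0 : EuclideanSpace ℝ (Fin 2)) 1 : ℝ) = 0 := rfl
    have e4 : 4*a+1+1 = 4*a+2 := by omega
    simp only [pbQ, e3, e4, Nat.descFactorial_self, pow_zero]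
    rw [hz1, zero_pow hbne]
    simp [EuclideanSpace.single_apply]
  refine ⟨?_, hval⟩
  rw [hval]
  exact mul_ne_zero (pow_ne_zero _ (by norm_num))
    (Nat.cast_ne_zero.2 (Nat.factorial_ne_zero _))
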